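/- Fix an integer m ≥ 1 and an even integer n ≥ 2. In ℤ^m, let Λ^♯ = (n/2)ℤ^m, let Q_n ⊆ Λ^♯ be the subgroup generated by the vectors (n/2)(e_i − e_{i+1}) for 1 ≤ i < m together with n·e_m, and let E = {a ∈ ℤ^m : Σ_i a_i ∈ 2ℤ}. Then the homomorphism Λ^♯ → ℤ^m given by μ ↦ (2/n)·μ carries Q_n onto E and induces a group isomorphism Λ^♯/Q_n ≅ ℤ^m/E; in particular Λ^♯/Q_n is cyclic of order 2, generated by the class of (n/2)e_m. -/

import Mathlib

/-- The sublattice `kℤ^m ⊆ ℤ^m`. -/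
def kLattice (m : ℕ) (k : ℤ) : AddSubgroup (Fin m → ℤ) where
  carrier := {μ | ∀ i, k ∣ μ i}
  zero_mem' := by intro i; simp
  add_mem' := by intro a b ha hb i; simpa using dvd_add (ha i) (hb i)
  neg_mem' := by intro a ha i; simpa using ha i

/-- The subgroup `E = {a ∈ ℤ^m : Σᵢ aᵢ even}`. -/
def evenSumLattice (m : ℕ) : AddSubgroup (Fin m → ℤ) where
  carrier := {a | (2 : ℤ) ∣ ∑ i, a i}
  zero_mem' := by simp
  add_mem' := by
    intro a b ha hb
    simpa [Finset.sum_add_distrib] using dvd_add ha hb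
  neg_mem' := by
    intro a ha
    simpa [Finset.sum_neg_distrib] using ha

/-- The subgroup `Q_n` of `ℤ^m` generated by `k(e_i − e_{i+1})` for `1 ≤ i < m` together with
`2k·e_m` (for `n = 2k` these are `(n/2)(e_i − e_{i+1})` and `n·e_m`). -/
def qLattice (m : ℕ) (k : ℤ) : AddSubgroup (Fin m → ℤ) :=
  AddSubgroup.closure
    ({v | ∃ i j : Fin m, (i : ℕ) + 1 = (j : ℕ) ∧
        v = k • (Pi.single i (1 : ℤ) - Pi.single j 1)} ∪
     {v | ∃ i : Fin m, (i : ℕ) + 1 = m ∧ v = (2 * k) • Pi.single i (1 : ℤ)})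

namespace SpAux

lemma single_last_mem {m : ℕ} (hm : 1 ≤ m) (k : ℤ) :
    (2 * k) • Pi.single (⟨m - 1, by omega⟩ : Fin m) (1 : ℤ) ∈ qLattice m k := by
  apply AddSubgroup.subset_closure
  right
  exact ⟨⟨m - 1, by omega⟩, by simp; omega, rfl⟩

lemma diff_mem {m : ℕ} (hm : 1 ≤ m) (k : ℤ) (d : ℕ) :
    ∀ i : Fin m, m - 1 - (i : ℕ) ≤ d →
      k • (Pi.single i (1 : ℤ) - Pi.single (⟨m - 1, by omega⟩ : Fin m) 1) ∈ qLattice m k := by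
  induction d with
  | zero =>
    intro i hi
    have hi' : i = (⟨m - 1, by omega⟩ : Fin m) := Fin.ext (by simp; omega)
    rw [hi', sub_self, smul_zero]; exact zero_mem _
  | succ d ih =>
    intro i hi
    by_cases h : (i : ℕ) = m - 1
    · have hi' : i = (⟨m - 1, by omega⟩ : Fin m) := Fin.ext (by simp [h])
      rw [hi', sub_self, smul_zero]; exact zero_mem _
    · have hj : (i : ℕ) + 1 < m := by have := i.2; omega
      set j : Fin m := ⟨(i : ℕ) + 1, hj⟩ with hjdef
      have h1 : k • (Pi.single i (1 : ℤ) - Pi.single j 1) ∈ qLattice m k := by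
        apply AddSubgroup.subset_closure
        left
        exact ⟨i, j, rfl, rfl⟩
      have h2 := ih j (by simp [hjdef]; omega)
      have h3 := AddSubgroup.add_mem _ h1 h2
      convert h3 using 1
      module

lemma two_k_single_mem {m : ℕ} (hm : 1 ≤ m) (k : ℤ) (i : Fin m) :
    (2 * k) • Pi.single i (1 : ℤ) ∈ qLattice m k := by
  have h1 := diff_mem hm k (m - 1) i (by omega)
  have h2 := single_last_mem hm k
  have h3 := AddSubgroup.add_mem _ (AddSubgroup.add_mem _ h1 h1) h2
  convert h3 using 1
  module

lemma smul_mem_of_even {m : ℕ} (hm : 1 ≤ m) (k : ℤ) (a : Fin m → ℤ) (t : ℤ)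
    (ht : ∑ i, a i = 2 * t) : k • a ∈ qLattice m k := by
  have key : k • a =
      (∑ i, a i • (k • (Pi.single i (1 : ℤ) - Pi.single (⟨m - 1, by omega⟩ : Fin m) 1)))
        + t • ((2 * k) • Pi.single (⟨m - 1, by omega⟩ : Fin m) (1 : ℤ)) := by
    funext x
    simp only [Pi.add_apply, Finset.sum_apply, Pi.smul_apply, Pi.sub_apply, Pi.single_apply,
      smul_eq_mul]
    by_cases hx : x = (⟨m - 1, by omega⟩ : Fin m)
    · simp only [hx, eq_self_iff_true, if_true]
      rw [Finset.sum_congr rfl (fun i _ => by ring_nf :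
        ∀ i ∈ Finset.univ, a i * (k * ((if (⟨m - 1, by omega⟩ : Fin m) = i then (1:ℤ) else 0) - 1))
          = a i * k * (if (⟨m - 1, by omega⟩ : Fin m) = i then (1:ℤ) else 0) - a i * k)]
      rw [Finset.sum_sub_distrib]
      simp only [mul_ite, mul_one, mul_zero, Finset.sum_ite_eq, Finset.mem_univ, if_true]
      rw [← Finset.sum_mul, ht]
      ring
    · simp only [if_neg hx]
      rw [Finset.sum_congr rfl (fun i _ => by ring_nf :
        ∀ i ∈ Finset.univ, a i * (k * ((if x = i then (1:ℤ) else 0) - 0))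
          = a i * k * (if x = i then (1:ℤ) else 0))]
      simp only [mul_ite, mul_one, mul_zero, Finset.sum_ite_eq, Finset.mem_univ, if_true]
      ring
  rw [key]
  refine AddSubgroup.add_mem _ (AddSubgroup.sum_mem _ fun i _ => ?_) ?_
  · exact AddSubgroup.zsmul_mem _ (diff_mem hm k (m - 1) i (by omega)) _
  · exact AddSubgroup.zsmul_mem _ (single_last_mem hm k) _

lemma q_le_k (m : ℕ) (k : ℤ) : qLattice m k ≤ kLattice m k := by
  rw [qLattice, AddSubgroup.closure_le]
  rintro v (⟨i, j, hij, rfl⟩ | ⟨i, hi, rfl⟩) <;> intro x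
  · exact Dvd.intro _ rfl
  · rw [Pi.smul_apply, smul_eq_mul]
    exact Dvd.dvd.mul_right (dvd_mul_left k 2) _

lemma q_sum {m : ℕ} {k : ℤ} {v : Fin m → ℤ} (hv : v ∈ qLattice m k) :
    (2 * k) ∣ ∑ i, v i := by
  induction hv using AddSubgroup.closure_induction with
  | mem v hv =>
    rcases hv with ⟨i, j, hij, rfl⟩ | ⟨i, hi, rfl⟩
    · simp [Pi.single_apply, mul_sub, Finset.sum_sub_distrib]
    · simp only [Pi.smul_apply, Pi.single_apply, smul_eq_mul, mul_ite, mul_one, mul_zero,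
        Finset.sum_ite_eq, Finset.mem_univ, if_true]
      rw [Finset.sum_ite_eq' Finset.univ i (fun _ => 2 * k)]
      simp
  | zero => simp
  | add x y _ _ hx hy => simpa [Finset.sum_add_distrib] using dvd_add hx hy
  | neg x _ hx => simpa [Finset.sum_neg_distrib] using hx

lemma smul_left_injective {m : ℕ} {k : ℤ} (hk : k ≠ 0) {a b : Fin m → ℤ}
    (h : k • a = k • b) : a = b := by
  funext i
  have := congrFun h i
  simp only [Pi.smul_apply, smul_eq_mul] at this
  exact mul_left_cancel₀ hk this

/-- divide every coordinate by `k` -/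
def divk {m : ℕ} (k : ℤ) (μ : Fin m → ℤ) : Fin m → ℤ := fun i => μ i / k

lemma k_smul_divk {m : ℕ} {k : ℤ} {μ : Fin m → ℤ} (hμ : μ ∈ kLattice m k) :
    k • divk k μ = μ := by
  funext i
  exact Int.mul_ediv_cancel' (hμ i)

lemma divk_k_smul {m : ℕ} {k : ℤ} (hk : k ≠ 0) (a : Fin m → ℤ) :
    divk k (k • a) = a := by
  funext i
  simp only [divk, Pi.smul_apply, smul_eq_mul]
  exact Int.mul_ediv_cancel_left _ hk

lemma smul_mem_q_iff {m : ℕ} (hm : 1 ≤ m) {k : ℤ} (hk : 0 < k) (a : Fin m → ℤ) :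
    k • a ∈ qLattice m k ↔ a ∈ evenSumLattice m := by
  constructor
  · intro h
    have h2 := q_sum h
    have hs : ∑ i, (k • a) i = k * ∑ i, a i := by
      simp [Finset.mul_sum]
    rw [hs] at h2
    obtain ⟨c, hc⟩ := h2
    refine ⟨c, ?_⟩
    have : k * ∑ i, a i = k * (2 * c) := by rw [hc]; ring
    exact mul_left_cancel₀ hk.ne' this
  · rintro ⟨t, ht⟩
    exact smul_mem_of_even hm k a t ht

/-- The homomorphism `kℤ^m → ℤ^m/E`, `μ ↦ [μ/k]`. -/
noncomputable def fHom {m : ℕ} {k : ℤ} (hk : 0 < k) :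
    ↥(kLattice m k) →+ (Fin m → ℤ) ⧸ evenSumLattice m where
  toFun μ := QuotientAddGroup.mk (divk k (μ : Fin m → ℤ))
  map_zero' := by
    show QuotientAddGroup.mk (divk k (((0 : ↥(kLattice m k))) : Fin m → ℤ)) = 0
    have h0 : divk k (((0 : ↥(kLattice m k))) : Fin m → ℤ) = 0 :=
      funext fun i => Int.zero_ediv k
    rw [h0]
    rfl
  map_add' μ ν := by
    show QuotientAddGroup.mk (divk k ((μ + ν : ↥(kLattice m k)) : Fin m → ℤ))
      = QuotientAddGroup.mk (divk k (μ : Fin m → ℤ))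
        + QuotientAddGroup.mk (divk k (ν : Fin m → ℤ))
    have h1 : divk k ((μ + ν : ↥(kLattice m k)) : Fin m → ℤ)
        = divk k (μ : Fin m → ℤ) + divk k (ν : Fin m → ℤ) := by
      apply smul_left_injective hk.ne'
      rw [k_smul_divk (μ + ν).2, smul_add, k_smul_divk μ.2, k_smul_divk ν.2]
      rfl
    rw [h1]
    rfl

lemma fHom_apply {m : ℕ} {k : ℤ} (hk : 0 < k) (μ : ↥(kLattice m k)) :
    fHom hk μ = QuotientAddGroup.mk (divk k (μ : Fin m → ℤ)) := rfl

lemma fHom_surjective {m : ℕ} {k : ℤ} (hk : 0 < k) :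
    Function.Surjective (fHom (m := m) hk) := by
  intro x
  induction x using QuotientAddGroup.induction_on with
  | H a =>
    refine ⟨⟨k • a, fun i => Dvd.intro _ rfl⟩, ?_⟩
    rw [fHom_apply]
    show QuotientAddGroup.mk (divk k (k • a)) = _
    rw [divk_k_smul hk.ne']

lemma fHom_ker {m : ℕ} (hm : 1 ≤ m) {k : ℤ} (hk : 0 < k) (μ : ↥(kLattice m k)) :
    fHom (m := m) hk μ = 0 ↔ μ ∈ (qLattice m k).addSubgroupOf (kLattice m k) := by
  rw [fHom_apply, QuotientAddGroup.eq_zero_iff, ← smul_mem_q_iff hm hk, k_smul_divk μ.2]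
  rfl

noncomputable def eLift {m : ℕ} (hm : 1 ≤ m) {k : ℤ} (hk : 0 < k) :
    (↥(kLattice m k) ⧸ (qLattice m k).addSubgroupOf (kLattice m k))
      →+ ((Fin m → ℤ) ⧸ evenSumLattice m) :=
  QuotientAddGroup.lift ((qLattice m k).addSubgroupOf (kLattice m k)) (fHom hk)
    (fun μ hμ => (fHom_ker hm hk μ).mpr hμ)

lemma eLift_mk {m : ℕ} (hm : 1 ≤ m) {k : ℤ} (hk : 0 < k) (μ : ↥(kLattice m k)) :
    eLift hm hk (QuotientAddGroup.mk μ) = fHom hk μ := rfl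

/-- The induced isomorphism `kℤ^m/Q ≃+ ℤ^m/E`. -/
noncomputable def eEquiv {m : ℕ} (hm : 1 ≤ m) {k : ℤ} (hk : 0 < k) :
    (↥(kLattice m k) ⧸ (qLattice m k).addSubgroupOf (kLattice m k))
      ≃+ ((Fin m → ℤ) ⧸ evenSumLattice m) := by
  refine AddEquiv.ofBijective (eLift hm hk) ⟨?_, ?_⟩
  · rw [injective_iff_map_eq_zero]
    intro x
    induction x using QuotientAddGroup.induction_on with
    | H μ =>
      intro h
      rw [eLift_mk] at h
      rw [QuotientAddGroup.eq_zero_iff]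
      exact (fHom_ker hm hk μ).mp h
  · intro x
    obtain ⟨μ, hμ⟩ := fHom_surjective hk x
    exact ⟨QuotientAddGroup.mk μ, by rwa [eLift_mk]⟩

lemma eEquiv_apply {m : ℕ} (hm : 1 ≤ m) {k : ℤ} (hk : 0 < k) (μ : ↥(kLattice m k))
    (a : Fin m → ℤ) (h : k • a = (μ : Fin m → ℤ)) :
    eEquiv hm hk (QuotientAddGroup.mk μ) = QuotientAddGroup.mk a := by
  have ha : divk k (μ : Fin m → ℤ) = a := by
    apply smul_left_injective hk.ne'
    rw [k_smul_divk μ.2, h]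
  show eLift hm hk (QuotientAddGroup.mk μ) = _
  rw [eLift_mk, fHom_apply, ha]

/-- The sum-mod-2 homomorphism. -/
def sHom (m : ℕ) : (Fin m → ℤ) →+ ZMod 2 where
  toFun a := ((∑ i, a i : ℤ) : ZMod 2)
  map_zero' := by simp
  map_add' a b := by
    simp only [Pi.add_apply]
    push_cast [Finset.sum_add_distrib]
    ring

lemma sHom_apply {m : ℕ} (a : Fin m → ℤ) : sHom m a = ((∑ i, a i : ℤ) : ZMod 2) := rfl

lemma sHom_ker {m : ℕ} (a : Fin m → ℤ) : sHom m a = 0 ↔ a ∈ evenSumLattice m := by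
  rw [sHom_apply, ZMod.intCast_zmod_eq_zero_iff_dvd]
  exact Iff.rfl

lemma sHom_surjective {m : ℕ} (hm : 1 ≤ m) : Function.Surjective (sHom m) := by
  intro c
  obtain ⟨z, hz⟩ := ZMod.intCast_surjective (n := 2) c
  refine ⟨Pi.single (⟨0, hm⟩ : Fin m) z, ?_⟩
  rw [sHom_apply, Finset.sum_pi_single']
  simp [hz]

noncomputable def e2Lift (m : ℕ) :
    ((Fin m → ℤ) ⧸ evenSumLattice m) →+ ZMod 2 :=
  QuotientAddGroup.lift (evenSumLattice m) (sHom m) (fun a ha => (sHom_ker a).mpr ha)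

lemma e2Lift_mk {m : ℕ} (a : Fin m → ℤ) :
    e2Lift m (QuotientAddGroup.mk a) = sHom m a := rfl

/-- `ℤ^m/E ≃+ ZMod 2`. -/
noncomputable def e2Equiv {m : ℕ} (hm : 1 ≤ m) :
    ((Fin m → ℤ) ⧸ evenSumLattice m) ≃+ ZMod 2 := by
  refine AddEquiv.ofBijective (e2Lift m) ⟨?_, ?_⟩
  · rw [injective_iff_map_eq_zero]
    intro x
    induction x using QuotientAddGroup.induction_on with
    | H a =>
      intro h
      rw [e2Lift_mk] at h
      rw [QuotientAddGroup.eq_zero_iff]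
      exact (sHom_ker a).mp h
  · intro c
    obtain ⟨a, ha⟩ := sHom_surjective hm c
    exact ⟨QuotientAddGroup.mk a, by rwa [e2Lift_mk]⟩

end SpAux

/-- For `n = 2k` even: with `Λ^♯ = (n/2)ℤ^m`, `Q_n` the subgroup generated by
`(n/2)(e_i − e_{i+1})` and `n·e_m`, and `E = {a : Σ aᵢ even}`: the map `μ ↦ (2/n)μ` carries
`Q_n` onto `E` and induces an isomorphism `Λ^♯/Q_n ≅ ℤ^m/E`; in particular `Λ^♯/Q_n` is
cyclic of order 2, generated by the class of `(n/2)e_m`. -/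
theorem sharp_mod_roots_Sp (m n k : ℕ) (hm : 1 ≤ m) (hk : 1 ≤ k) (hn : n = 2 * k) :
    qLattice m (k : ℤ) ≤ kLattice m (k : ℤ) ∧
    (∀ a : Fin m → ℤ, (k : ℤ) • a ∈ qLattice m (k : ℤ) ↔ a ∈ evenSumLattice m) ∧
    (∃ e : (↥(kLattice m (k : ℤ)) ⧸
          (qLattice m (k : ℤ)).addSubgroupOf (kLattice m (k : ℤ)))
        ≃+ ((Fin m → ℤ) ⧸ evenSumLattice m),
      ∀ (μ : kLattice m (k : ℤ)) (a : Fin m → ℤ), (k : ℤ) • a = (μ : Fin m → ℤ) →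
        e (QuotientAddGroup.mk μ) = QuotientAddGroup.mk a) ∧
    Nat.card (↥(kLattice m (k : ℤ)) ⧸
      (qLattice m (k : ℤ)).addSubgroupOf (kLattice m (k : ℤ))) = 2 ∧
    (∀ μ ∈ kLattice m (k : ℤ), μ ∈ qLattice m (k : ℤ) ∨
      μ - (k : ℤ) • Pi.single (⟨m - 1, by omega⟩ : Fin m) 1 ∈ qLattice m (k : ℤ)) := by
  have hk' : (0 : ℤ) < (k : ℤ) := by exact_mod_cast hk
  refine ⟨SpAux.q_le_k m k, fun a => SpAux.smul_mem_q_iff hm hk' a,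
    ⟨SpAux.eEquiv hm hk', fun μ a h => SpAux.eEquiv_apply hm hk' μ a h⟩, ?_, ?_⟩
  · have h1 := Nat.card_congr (SpAux.eEquiv hm hk').toEquiv
    have h2 := Nat.card_congr (SpAux.e2Equiv (m := m) hm).toEquiv
    rw [h1, h2, Nat.card_eq_fintype_card]
    rfl
  · intro μ hμ
    set a : Fin m → ℤ := SpAux.divk (k : ℤ) μ with hadef
    have ha : (k : ℤ) • a = μ := SpAux.k_smul_divk hμ
    rcases Int.even_or_odd (∑ i, a i) with ⟨t, ht⟩ | ⟨t, ht⟩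
    · left
      rw [← ha]
      exact SpAux.smul_mem_of_even hm _ a t (by omega)
    · right
      have hb : μ - (k : ℤ) • Pi.single (⟨m - 1, by omega⟩ : Fin m) (1 : ℤ)
          = (k : ℤ) • (a - Pi.single (⟨m - 1, by omega⟩ : Fin m) (1 : ℤ)) := by
        rw [smul_sub, ha]
      rw [hb]
      refine SpAux.smul_mem_of_even hm _ _ t ?_
      simp only [Pi.sub_apply]
      rw [Finset.sum_sub_distrib, Finset.sum_pi_single']
      simp only [Finset.mem_univ, if_true]
      omega
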